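/- Let A ∈ SL(2,ℝ) be hyperbolic, set t := |tr A| > 2 and N(A) := ((t + √(t² − 4))/2)². Then the infimum over z in the upper half-plane ℍ of the hyperbolic distance dist(z, A • z) equals log N(A) = 2·log((t + √(t² − 4))/2), and this infimum is attained at some point of ℍ. (This is the statement that the periodic geodesic corresponding to the conjugacy class of A has length log N(A).) -/

import Mathlib

open scoped MatrixGroups UpperHalfPlane
open Matrix

theorem displacement_of_hyperbolic
    (A : SL(2, ℝ)) (t : ℝ)
    (ht : t = |Matrix.trace (A : Matrix (Fin 2) (Fin 2) ℝ)|)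
    (ht2 : 2 < t)
    (N : ℝ) (hN : N = ((t + Real.sqrt (t ^ 2 - 4)) / 2) ^ 2) :
    IsLeast (Set.range fun z : ℍ => dist z (A • z)) (Real.log N) ∧
    Real.log N = 2 * Real.log ((t + Real.sqrt (t ^ 2 - 4)) / 2) := by
  set a : ℝ := (A : Matrix (Fin 2) (Fin 2) ℝ) 0 0 with ha
  set b : ℝ := (A : Matrix (Fin 2) (Fin 2) ℝ) 0 1 with hb
  set c : ℝ := (A : Matrix (Fin 2) (Fin 2) ℝ) 1 0 with hc
  set d : ℝ := (A : Matrix (Fin 2) (Fin 2) ℝ) 1 1 with hd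
  have hdet : a * d - b * c = 1 := by
    have h := A.property
    rw [Matrix.det_fin_two] at h
    linarith [h]
  have htr : t ^ 2 = (a + d) ^ 2 := by
    rw [ht, Matrix.trace_fin_two, ← ha, ← hd, sq_abs]
  set s : ℝ := Real.sqrt (t ^ 2 - 4) with hs
  have ht4 : (0:ℝ) < t ^ 2 - 4 := by nlinarith
  have hs2 : s ^ 2 = t ^ 2 - 4 := Real.sq_sqrt ht4.le
  have hs0 : 0 ≤ s := Real.sqrt_nonneg _
  have hN1 : 1 ≤ N := by rw [hN]; nlinarith
  have hNpos : (0:ℝ) < N := lt_of_lt_of_le one_pos hN1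
  have hNinv : N⁻¹ = ((t - s) / 2) ^ 2 := by
    refine inv_eq_of_mul_eq_one_right ?_
    rw [hN]; linear_combination ((s^2 - t^2 - 4)/16) * hs2
  have hcoshlog : Real.cosh (Real.log N) = 1 + (t ^ 2 - 4) / 2 := by
    rw [Real.cosh_log hNpos, hNinv, hN]
    linear_combination hs2 / 4
  have hlogN0 : 0 ≤ Real.log N := Real.log_nonneg hN1
  -- key formula
  have key : ∀ z : ℍ, Real.cosh (dist z (A • z)) =
      1 + ((t ^ 2 - 4) + (c * (z.re ^ 2 + z.im ^ 2) + (d - a) * z.re - b) ^ 2 / z.im ^ 2) / 2 := by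
    intro z
    set x : ℝ := z.re with hx
    set y : ℝ := z.im with hy
    have hy0 : 0 < y := z.im_pos
    have hzc : (z : ℂ) = Complex.mk x y := by
      apply Complex.ext <;> simp [hx, hy, UpperHalfPlane.coe_re, UpperHalfPlane.coe_im]
    have hden : ((c:ℂ) * z + d) ≠ 0 := by
      intro h
      have him : c * y = 0 := by
        have := congrArg Complex.im h
        simpa [hzc] using this
      have hc0 : c = 0 := by
        rcases mul_eq_zero.mp him with h1 | h1
        · exact h1
        · exact absurd h1 hy0.ne'
      have hre : c * x + d = 0 := by
        have := congrArg Complex.re h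
        simpa [hzc] using this
      have hd0 : d = 0 := by rw [hc0] at hre; simpa using hre
      rw [hc0, hd0] at hdet; simp at hdet
    have hnsq : 0 < Complex.normSq ((c:ℂ) * z + d) := Complex.normSq_pos.mpr hden
    have hw : ((A • z : ℍ) : ℂ) = ((a:ℂ) * z + b) / ((c:ℂ) * z + d) := by
      rw [UpperHalfPlane.specialLinearGroup_apply]
      simp [ha, hb, hc, hd]
    have hnsq_eq : Complex.normSq ((c:ℂ) * z + d) = (c * x + d) ^ 2 + (c * y) ^ 2 := by
      rw [hzc]; simp [Complex.normSq_apply]; ring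
    have hD : (c * x + d) ^ 2 + (c * y) ^ 2 ≠ 0 := by rw [← hnsq_eq]; exact hnsq.ne'
    have him : (A • z : ℍ).im = y / Complex.normSq ((c:ℂ) * z + d) := by
      rw [← UpperHalfPlane.coe_im, hw, Complex.div_im, hnsq_eq, hzc]
      simp only [Complex.add_im, Complex.add_re, Complex.mul_im, Complex.mul_re,
        Complex.ofReal_re, Complex.ofReal_im]
      rw [div_sub_div_same, div_left_inj' hD]
      linear_combination y * hdet
    rw [UpperHalfPlane.cosh_dist, him]
    have hdist : dist (z : ℂ) ((A • z : ℍ) : ℂ) ^ 2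
        = Complex.normSq ((z : ℂ) - ((A • z : ℍ) : ℂ)) := by
      rw [Complex.dist_eq, Complex.sq_norm]
    rw [hdist, hw]
    have hsub : (z : ℂ) - ((a:ℂ) * z + b) / ((c:ℂ) * z + d)
        = ((c:ℂ) * z ^ 2 + ((d:ℂ) - a) * z - b) / ((c:ℂ) * z + d) := by
      rw [eq_div_iff hden, sub_mul, div_mul_cancel₀ _ hden]; ring
    rw [hsub, Complex.normSq_div]
    have hnum : Complex.normSq ((c:ℂ) * z ^ 2 + ((d:ℂ) - a) * z - b)
        = (c * (x ^ 2 - y ^ 2) + (d - a) * x - b) ^ 2 + ((2 * c * x + (d - a)) * y) ^ 2 := by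
      rw [hzc]; simp [Complex.normSq_apply, Complex.ext_iff, pow_two]; ring
    have hiden : (c * (x ^ 2 - y ^ 2) + (d - a) * x - b) ^ 2 + ((2 * c * x + (d - a)) * y) ^ 2
        = (t ^ 2 - 4) * y ^ 2 + (c * (x ^ 2 + y ^ 2) + (d - a) * x - b) ^ 2 := by
      linear_combination (-y ^ 2) * htr + (-4 * y ^ 2) * hdet
    rw [hnum, hiden, hnsq_eq]
    rw [← hy]
    rw [mul_div_assoc', div_div_div_cancel_right₀ hD]
    field_simp
  have lb : ∀ z : ℍ, Real.log N ≤ dist z (A • z) := by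
    intro z
    have h1 : Real.cosh (Real.log N) ≤ Real.cosh (dist z (A • z)) := by
      rw [key z, hcoshlog]
      have h2 : 0 ≤ (c * (z.re ^ 2 + z.im ^ 2) + (d - a) * z.re - b) ^ 2 / z.im ^ 2 :=
        div_nonneg (sq_nonneg _) (sq_nonneg _)
      linarith
    have h3 := Real.cosh_le_cosh.mp h1
    rwa [abs_of_nonneg hlogN0, abs_of_nonneg dist_nonneg] at h3
  obtain ⟨x₀, y₀, hy₀, hK⟩ : ∃ x y : ℝ, 0 < y ∧ c * (x ^ 2 + y ^ 2) + (d - a) * x - b = 0 := by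
    by_cases hc0 : c = 0
    · have hda : d - a ≠ 0 := by
        intro h
        rw [hc0] at hdet
        nlinarith [htr, ht4]
      exact ⟨b / (d - a), 1, one_pos, by field_simp [hc0]; rw [hc0]; ring⟩
    · refine ⟨(a - d) / (2 * c), s / (2 * |c|), by positivity, ?_⟩
      have hsq : (s / (2 * |c|)) ^ 2 = s ^ 2 / (4 * c ^ 2) := by
        rw [div_pow, mul_pow, sq_abs]; norm_num
      rw [hsq]
      field_simp
      linear_combination 4*hs2 + 4*htr + 16*hdet
  set z₀ : ℍ := ⟨⟨x₀, y₀⟩, hy₀⟩ with hz₀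
  have hre0 : z₀.re = x₀ := rfl
  have him0 : z₀.im = y₀ := rfl
  have hmem : dist z₀ (A • z₀) = Real.log N := by
    have h1 : Real.cosh (dist z₀ (A • z₀)) = Real.cosh (Real.log N) := by
      rw [key z₀, hcoshlog, hre0, him0, hK]
      norm_num
    have h2 := Real.cosh_le_cosh.mp h1.le
    have h3 := Real.cosh_le_cosh.mp h1.ge
    rw [abs_of_nonneg hlogN0, abs_of_nonneg dist_nonneg] at h2 h3
    exact le_antisymm h2 h3
  refine ⟨⟨⟨z₀, hmem⟩, ?_⟩, ?_⟩
  · rintro r ⟨z, rfl⟩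
    exact lb z
  · rw [hN, Real.log_pow]
    push_cast
    ring
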